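/- Let p be an odd prime, t ≥ 1, and let a be an integer with gcd(a,p) = 1. Then #S'_2(a;p^t) = (p−1)p^{t−1}/2 if the Legendre symbol (a/p) = −1, and #S'_2(a;p^t) = (p−3)p^{t−1}/2 if (a/p) = 1. -/

import Mathlib

/-- `u` is a square modulo `N`. -/
def IsSquareMod (u : ℤ) (N : ℕ) : Prop := ∃ x : ℤ, x ^ 2 ≡ u [ZMOD (N : ℤ)]

/-- `S'_2(a;p^t)`: residues `k mod p^t` with `k² - a` a square mod `p^t` and `p ∤ (k² - a)`. -/
def S2' (a : ℤ) (p t : ℕ) : Set (ZMod (p ^ t)) :=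
  {s | ∃ k : ℤ, s = (k : ZMod (p ^ t)) ∧ IsSquareMod (k ^ 2 - a) (p ^ t) ∧
    ¬ ((p : ℤ) ∣ (k ^ 2 - a))}


lemma sqlift (p : ℕ) (hp : p.Prime) (hp2 : p ≠ 2) (u : ℤ) (hu : ¬ (p:ℤ) ∣ u)
    (h1 : ∃ x : ℤ, (p:ℤ) ∣ x^2 - u) : ∀ j : ℕ, ∃ x : ℤ, ((p:ℤ)^j) ∣ x^2 - u := by
  have hpi : Prime (p : ℤ) := Nat.prime_iff_prime_int.mp hp
  intro j
  induction j with
  | zero => exact ⟨0, by simp⟩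
  | succ j ih =>
    rcases j.eq_zero_or_pos with rfl | hj
    · obtain ⟨x, hx⟩ := h1
      exact ⟨x, by simpa using hx⟩
    obtain ⟨x, d, hd⟩ := ih
    have hpx : ¬ (p:ℤ) ∣ x := by
      intro hdvd
      apply hu
      have h2 : (p:ℤ) ∣ x ^ 2 - u := (dvd_pow_self ((p:ℤ)) hj.ne').trans ⟨d, hd⟩
      have h3 : (p:ℤ) ∣ x ^ 2 := dvd_pow hdvd two_ne_zero
      have := dvd_sub h3 h2
      simpa using this
    have hcop : IsCoprime ((p:ℤ)) (2 * x) := by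
      rw [hpi.coprime_iff_not_dvd]
      rintro hdvd
      rcases hpi.dvd_mul.mp hdvd with h | h
      · have h2 : p ∣ 2 := by exact_mod_cast h
        have := Nat.le_of_dvd (by norm_num) h2
        have := hp.two_le
        omega
      · exact hpx h
    obtain ⟨m, n, hmn⟩ := hcop
    -- choose c := -d * n, then 2*x*c + d = d*(1 - 2*x*n) = d * (m*p)
    refine ⟨x + (-d * n) * (p:ℤ)^j, ?_⟩
    have key : (p:ℤ) ∣ 2 * x * (-d * n) + d := by
      exact ⟨d * m, by linear_combination (-d) * hmn⟩
    obtain ⟨e, he⟩ := key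
    refine ⟨e + (-d*n)^2 * (p:ℤ)^(j-1), ?_⟩
    have hj1 : (p:ℤ)^(j+1) = (p:ℤ)^j * (p:ℤ) := by ring
    have h2j : (p:ℤ)^j * (p:ℤ)^j = ((p:ℤ)^j * (p:ℤ)) * (p:ℤ)^(j-1) := by
      have hjj : j - 1 + 1 = j := by omega
      rw [mul_assoc, ← pow_succ' (p:ℤ) (j-1), hjj, ← pow_add]
    calc (x + (-d * n) * (p:ℤ)^j)^2 - u
        = (x^2 - u) + (2 * x * (-d*n)) * (p:ℤ)^j + (-d*n)^2 * ((p:ℤ)^j * (p:ℤ)^j) := by ring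
      _ = (p:ℤ)^j * (2 * x * (-d * n) + d) + (-d*n)^2 * ((p:ℤ)^j * (p:ℤ)^j) := by
          rw [hd]; ring
      _ = (p:ℤ)^(j+1) * (e + (-d*n)^2 * (p:ℤ)^(j-1)) := by
          rw [he, h2j, hj1]; ring


open Finset

lemma fiber_card (p t : ℕ) [hp : Fact p.Prime] (ht : 1 ≤ t) (y : ZMod p) :
    (univ.filter (fun x : ZMod (p^t) =>
      ZMod.castHom (dvd_pow_self p (Nat.one_le_iff_ne_zero.mp ht)) (ZMod p) x = y)).card
      = p^(t-1) := by
  set φ := ZMod.castHom (dvd_pow_self p (Nat.one_le_iff_ne_zero.mp ht)) (ZMod p) with hφ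
  have hsurj : Function.Surjective φ := by
    intro z
    refine ⟨(z.val : ZMod (p^t)), ?_⟩
    rw [map_natCast]
    exact ZMod.natCast_rightInverse z
  have hconst : ∀ y₁ y₂ : ZMod p,
      (univ.filter (fun x => φ x = y₁)).card = (univ.filter (fun x => φ x = y₂)).card := by
    intro y₁ y₂
    obtain ⟨d, hd⟩ := hsurj (y₂ - y₁)
    apply Finset.card_bij' (fun x _ => x + d) (fun x _ => x - d)
    · intro x hx
      simp only [mem_filter, mem_univ, true_and] at hx ⊢
      rw [map_add, hx, hd]; ring
    · intro x hx
      simp only [mem_filter, mem_univ, true_and] at hx ⊢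
      rw [map_sub, hx, hd]; ring
    · intro x _; ring
    · intro x _; ring
  have htot : ∑ y : ZMod p, (univ.filter (fun x => φ x = y)).card = p^t := by
    rw [← Finset.card_eq_sum_card_fiberwise (fun x _ => mem_univ (φ x))]
    simp [ZMod.card]
  have h2 : ∀ y' : ZMod p, (univ.filter (fun x => φ x = y')).card
      = (univ.filter (fun x => φ x = y)).card := fun y' => hconst y' y
  rw [Finset.sum_congr rfl (fun y' _ => h2 y'), Finset.sum_const, card_univ, ZMod.card,
    smul_eq_mul] at htot
  have hpt : p * p^(t-1) = p^t := by
    rw [← pow_succ']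
    congr 1
    omega
  have hppos : 0 < p := hp.out.pos
  exact Nat.eq_of_mul_eq_mul_left hppos (by omega)

lemma precount (p t : ℕ) [hp : Fact p.Prime] (ht : 1 ≤ t) (S : Finset (ZMod p)) :
    (univ.filter (fun x : ZMod (p^t) =>
      ZMod.castHom (dvd_pow_self p (Nat.one_le_iff_ne_zero.mp ht)) (ZMod p) x ∈ S)).card
      = p^(t-1) * S.card := by
  set φ := ZMod.castHom (dvd_pow_self p (Nat.one_le_iff_ne_zero.mp ht)) (ZMod p) with hφ
  rw [Finset.card_eq_sum_card_fiberwise (f := φ) (s := univ.filter (fun x => φ x ∈ S)) (t := S)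
    (fun x hx => (mem_filter.mp (Finset.mem_coe.mp hx)).2)]
  have : ∀ y ∈ S, ((univ.filter (fun x => φ x ∈ S)).filter (fun x => φ x = y)).card
      = p^(t-1) := by
    intro y hy
    rw [Finset.filter_filter]
    have : (univ.filter (fun x => φ x ∈ S ∧ φ x = y)) = univ.filter (fun x => φ x = y) := by
      apply Finset.filter_congr
      intro x _
      constructor
      · tauto
      · intro h; exact ⟨h ▸ hy, h⟩
    rw [this]
    exact fiber_card p t ht y
  rw [Finset.sum_congr rfl this, Finset.sum_const, smul_eq_mul, mul_comm]



lemma Tcount (p : ℕ) [hp : Fact p.Prime] (hp2 : p ≠ 2) (b : ZMod p) (hb : b ≠ 0) :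
    2 * ((univ.filter (fun y : ZMod p => y^2 - b ≠ 0 ∧ IsSquare (y^2 - b))).card : ℤ)
      = (p : ℤ) - 2 - quadraticChar (ZMod p) b := by
  classical
  have hchar : ringChar (ZMod p) ≠ 2 := by
    rw [ZMod.ringChar_zmod_n]; exact hp2
  have h2 : (2 : ZMod p) ≠ 0 := Ring.two_ne_zero hchar
  set A : Finset (ZMod p × ZMod p) := univ.filter (fun z => z.1^2 - z.2^2 = b) with hA
  set B : Finset (ZMod p × ZMod p) := univ.filter (fun z => z.1 * z.2 = b) with hB
  -- Step 1: A.card = B.card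
  have hAB : A.card = B.card := by
    refine Finset.card_nbij' (fun z => (z.1 + z.2, z.1 - z.2))
      (fun w => ((w.1 + w.2) * 2⁻¹, (w.1 - w.2) * 2⁻¹)) ?_ ?_ ?_ ?_
    · intro z hz
      simp only [mem_coe, hA, hB, mem_filter, mem_univ, true_and] at hz ⊢
      rw [← hz]; ring
    · intro w hw
      simp only [mem_coe, hA, hB, mem_filter, mem_univ, true_and] at hw ⊢
      rw [← hw]
      field_simp
      ring
    · intro z _
      rw [Prod.ext_iff]
      constructor <;> · simp only; field_simp; ring
    · intro w _
      rw [Prod.ext_iff]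
      constructor <;> · simp only; field_simp; ring
  -- Step 2: B.card = p - 1
  have hBcard : B.card = p - 1 := by
    have key : B.card = (univ.erase (0 : ZMod p)).card := by
      refine Finset.card_nbij' (fun z => z.1) (fun u => (u, u⁻¹ * b)) ?_ ?_ ?_ ?_
      · intro z hz
        simp only [mem_coe, hB, mem_filter, mem_univ, true_and] at hz
        simp only [mem_coe, mem_erase, mem_univ, and_true]
        intro h0
        rw [h0] at hz
        simp at hz
        exact hb hz.symm
      · intro u hu
        simp only [mem_coe, mem_erase, mem_univ, and_true] at hu
        simp only [mem_coe, hB, mem_filter, mem_univ, true_and]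
        field_simp
      · intro z hz
        simp only [mem_coe, hB, mem_filter, mem_univ, true_and] at hz
        have hz1 : z.1 ≠ 0 := by
          intro h0
          rw [h0] at hz
          simp at hz
          exact hb hz.symm
        rw [Prod.ext_iff]
        refine ⟨rfl, ?_⟩
        simp only
        field_simp
        exact hz.symm
      · intro u _; rfl
    rw [key, Finset.card_erase_of_mem (mem_univ _), card_univ, ZMod.card]
  -- Step 3: fiberwise count of A over first coordinate
  have hfiber : ∀ s : ZMod p, ((A.filter (fun z => z.1 = s)).card : ℤ)
      = quadraticChar (ZMod p) (s^2 - b) + 1 := by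
    intro s
    have hcard : (A.filter (fun z => z.1 = s)).card
        = (univ.filter (fun y : ZMod p => y^2 = s^2 - b)).card := by
      refine Finset.card_nbij' (fun z => z.2) (fun y => (s, y)) ?_ ?_ ?_ ?_
      · intro z hz
        simp only [mem_coe, hA, mem_filter, mem_univ, true_and] at hz ⊢
        obtain ⟨h1, h2'⟩ := hz
        rw [h2'] at h1
        linear_combination -h1
      · intro y hy
        simp only [mem_coe, hA, mem_filter, mem_univ, true_and] at hy ⊢
        exact ⟨by rw [hy]; ring, trivial⟩
      · intro z hz
        simp only [mem_coe, hA, mem_filter, mem_univ, true_and] at hz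
        rw [Prod.ext_iff]
        exact ⟨hz.2.symm, rfl⟩
      · intro y _; rfl
    rw [hcard]
    have hq := quadraticChar_card_sqrts hchar (s^2 - b)
    rw [← hq]
    congr 1
    rw [Set.toFinset_setOf]
  have hsumA : A.card = ∑ s : ZMod p, (A.filter (fun z => z.1 = s)).card :=
    Finset.card_eq_sum_card_fiberwise (fun x _ => mem_univ x.1)
  set T : Finset (ZMod p) := univ.filter (fun y => y^2 - b ≠ 0 ∧ IsSquare (y^2 - b)) with hT
  have hval : ∀ s : ZMod p, ((A.filter (fun z => z.1 = s)).card : ℤ)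
      = (if s ∈ T then 2 else if s^2 = b then 1 else 0) := by
    intro s
    rw [hfiber s]
    by_cases hs : s ∈ T
    · simp only [hs, if_true]
      simp only [hT, mem_filter, mem_univ, true_and] at hs
      rw [(quadraticChar_one_iff_isSquare hs.1).mpr hs.2]
      norm_num
    · simp only [hs, if_false]
      simp only [hT, mem_filter, mem_univ, true_and, not_and_or, not_not] at hs
      by_cases hsb : s^2 = b
      · simp only [hsb, if_true]
        have hbb : b - b = 0 := sub_self b
        rw [hbb, quadraticChar_zero]
        norm_num
      · simp only [hsb, if_false]
        have hne : s^2 - b ≠ 0 := sub_ne_zero.mpr hsb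
        have hns : ¬ IsSquare (s^2 - b) := by tauto
        rw [quadraticChar_neg_one_iff_not_isSquare.mpr hns]
        ring
  have hsum2 : ((A.card : ℤ)) = 2 * T.card + ((univ.filter (fun s : ZMod p => s^2 = b)).card : ℤ) := by
    rw [hsumA, Nat.cast_sum]
    rw [Finset.sum_congr rfl (fun s _ => hval s)]
    rw [Finset.sum_ite, Finset.sum_const, Finset.sum_ite, Finset.sum_const, Finset.sum_const]
    simp only [nsmul_eq_mul, smul_eq_mul, mul_zero, add_zero, mul_one]
    have hTfilt : univ.filter (fun s : ZMod p => s ∈ T) = T := by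
      rw [Finset.filter_mem_eq_inter, Finset.univ_inter]
    have hQfilt : ((univ.filter (fun s : ZMod p => ¬ s ∈ T)).filter (fun s => s^2 = b))
        = univ.filter (fun s : ZMod p => s^2 = b) := by
      rw [Finset.filter_filter]
      apply Finset.filter_congr
      intro s _
      simp only [hT, mem_filter, mem_univ, true_and, and_iff_right_iff_imp]
      intro hsb
      rw [not_and_or, not_not]
      left
      rw [hsb]; ring
    rw [hTfilt, hQfilt]
    ring
  have hS0 : ((univ.filter (fun s : ZMod p => s^2 = b)).card : ℤ)
      = quadraticChar (ZMod p) b + 1 := by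
    have hq := quadraticChar_card_sqrts hchar b
    rw [← hq]
    congr 1
    rw [Set.toFinset_setOf]
  have hA1 : (A.card : ℤ) = (p : ℤ) - 1 := by
    rw [hAB, hBcard]
    have := hp.out.pos
    push_cast [Nat.cast_sub (by omega : 1 ≤ p)]
    ring
  rw [hA1, hS0] at hsum2
  linarith

theorem stmt7 (p : ℕ) [hp : Fact p.Prime] (hp2 : p ≠ 2) (t : ℕ) (ht : 1 ≤ t)
    (a : ℤ) (ha : IsCoprime a (p : ℤ)) :
    (legendreSym p a = -1 →
      ((S2' a p t).ncard : ℚ) = ((p : ℚ) - 1) * (p : ℚ) ^ (t - 1) / 2) ∧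
    (legendreSym p a = 1 →
      ((S2' a p t).ncard : ℚ) = ((p : ℚ) - 3) * (p : ℚ) ^ (t - 1) / 2) := by
  classical
  have hppr := hp.out
  have hpi : Prime (p : ℤ) := Nat.prime_iff_prime_int.mp hppr
  have hpa : ¬ (p:ℤ) ∣ a := by
    rw [← hpi.coprime_iff_not_dvd]
    exact ha.symm
  have hb : ((a : ZMod p)) ≠ 0 := by
    rw [Ne, ZMod.intCast_zmod_eq_zero_iff_dvd]
    exact hpa
  set φ := ZMod.castHom (dvd_pow_self p (Nat.one_le_iff_ne_zero.mp ht)) (ZMod p) with hφ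
  set Tfin : Finset (ZMod p) :=
    univ.filter (fun y => y^2 - (a : ZMod p) ≠ 0 ∧ IsSquare (y^2 - (a : ZMod p))) with hTfin
  -- key characterization for integers k
  have hkey : ∀ k : ℤ, (IsSquareMod (k^2 - a) (p^t) ∧ ¬ ((p:ℤ) ∣ (k^2-a))) ↔
      ((k : ZMod p)^2 - (a : ZMod p) ≠ 0 ∧ IsSquare ((k : ZMod p)^2 - (a : ZMod p))) := by
    intro k
    have hcast : (((k^2 - a : ℤ)) : ZMod p) = (k : ZMod p)^2 - (a : ZMod p) := by
      push_cast; ring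
    constructor
    · rintro ⟨⟨x, hx⟩, hnd⟩
      refine ⟨?_, ?_⟩
      · rw [← hcast, Ne, ZMod.intCast_zmod_eq_zero_iff_dvd]; exact hnd
      · have hdvd : (((p^t : ℕ)) : ℤ) ∣ (k^2 - a) - x^2 := Int.ModEq.dvd hx
        have hdvd' : (p : ℤ) ∣ (k^2 - a) - x^2 := by
          refine dvd_trans ?_ hdvd
          push_cast
          exact dvd_pow_self _ (Nat.one_le_iff_ne_zero.mp ht)
        have h0 : (((k^2 - a) - x^2 : ℤ) : ZMod p) = 0 :=
          (ZMod.intCast_zmod_eq_zero_iff_dvd _ p).mpr hdvd'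
        refine ⟨(x : ZMod p), ?_⟩
        push_cast at h0
        linear_combination h0
    · rintro ⟨hne, c, hc⟩
      have hnd : ¬ ((p:ℤ) ∣ (k^2 - a)) := by
        rw [← ZMod.intCast_zmod_eq_zero_iff_dvd, hcast]
        exact hne
      obtain ⟨x0, hx0⟩ := ZMod.intCast_surjective c
      have h1 : (p:ℤ) ∣ x0^2 - (k^2 - a) := by
        rw [← ZMod.intCast_zmod_eq_zero_iff_dvd]
        push_cast
        rw [hx0]
        linear_combination -hc
      obtain ⟨x, hxt⟩ := sqlift p hppr hp2 (k^2 - a) hnd ⟨x0, h1⟩ t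
      refine ⟨⟨x, ?_⟩, hnd⟩
      have h2' : ((p:ℤ))^t ∣ (k^2 - a) - x^2 := by
        have hn := dvd_neg.mpr hxt
        rwa [neg_sub] at hn
      rw [Int.modEq_iff_dvd]
      push_cast
      exact h2'
  -- set equality
  have hmem : S2' a p t = ↑(univ.filter (fun x : ZMod (p^t) => φ x ∈ Tfin)) := by
    ext s
    simp only [S2', Set.mem_setOf_eq, Finset.coe_filter, Set.mem_setOf_eq, mem_univ, true_and]
    constructor
    · rintro ⟨k, rfl, h1, h2⟩
      have hφk : φ ((k : ZMod (p^t))) = (k : ZMod p) := map_intCast φ k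
      rw [hφk, hTfin, mem_filter]
      exact ⟨mem_univ _, (hkey k).mp ⟨h1, h2⟩⟩
    · intro hs
      refine ⟨((s.val : ℕ) : ℤ), ?_, ?_⟩
      · push_cast
        exact (ZMod.natCast_rightInverse s).symm
      · have hsk : s = (((s.val : ℕ) : ℤ) : ZMod (p^t)) := by
          push_cast
          exact (ZMod.natCast_rightInverse s).symm
        rw [hsk] at hs
        rw [map_intCast φ] at hs
        rw [hTfin, mem_filter] at hs
        exact (hkey _).mpr hs.2
  have hncard : (S2' a p t).ncard = p^(t-1) * Tfin.card := by
    rw [hmem, Set.ncard_coe_finset]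
    exact precount p t ht Tfin
  have hcount := Tcount p hp2 ((a : ZMod p)) hb
  constructor
  · intro hleg
    unfold legendreSym at hleg
    rw [hleg] at hcount
    have hQ : (2:ℚ) * Tfin.card = (p : ℚ) - 1 := by
      have : 2 * (Tfin.card : ℤ) = (p : ℤ) - 1 := by linarith
      exact_mod_cast this
    rw [hncard]
    push_cast
    linear_combination ((p:ℚ)^(t-1)/2) * hQ
  · intro hleg
    unfold legendreSym at hleg
    rw [hleg] at hcount
    have hQ : (2:ℚ) * Tfin.card = (p : ℚ) - 3 := by
      have : 2 * (Tfin.card : ℤ) = (p : ℤ) - 3 := by linarith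
      exact_mod_cast this
    rw [hncard]
    push_cast
    linear_combination ((p:ℚ)^(t-1)/2) * hQ
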